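/- Let F be a family of subsets of [n], each of size at most k, and suppose |F| > r^k for some real r ≥ 1. Then there exists a set X such that F(X) is r-spread and |F(X)| > 1. -/
import Mathlib


/-- For a family `F` of subsets of `[n]` and a set `X ⊆ [n]`,
`F(X) := {F \ X : F ∈ F, X ⊆ F}`. -/
def restrictAt {α : Type*} [DecidableEq α] (F : Finset (Finset α)) (X : Finset α) :
    Finset (Finset α) :=
  (F.filter fun A => X ⊆ A).image fun A => A \ X

/-- A family `G` is `r`-spread if `|G(Y)| ≤ r^{-|Y|}·|G|` for every set `Y`. -/
def IsSpread {α : Type*} [DecidableEq α] (r : ℝ) (F : Finset (Finset α)) : Prop :=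
  ∀ Y : Finset α, ((restrictAt F Y).card : ℝ) ≤ r ^ (-(Y.card : ℤ)) * F.card

lemma card_restrictAt {α : Type*} [DecidableEq α] (F : Finset (Finset α)) (X : Finset α) :
    (restrictAt F X).card = (F.filter fun A => X ⊆ A).card := by
  apply Finset.card_image_of_injOn
  intro A hA B hB h
  simp only [Finset.coe_filter, Set.mem_setOf_eq] at hA hB
  rw [← Finset.sdiff_union_of_subset hA.2, ← Finset.sdiff_union_of_subset hB.2]
  exact congrArg (· ∪ X) h

lemma restrict_restrict {α : Type*} [DecidableEq α] (F : Finset (Finset α)) (X Y : Finset α)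
    (hd : Disjoint Y X) :
    restrictAt (restrictAt F X) Y = restrictAt F (X ∪ Y) := by
  ext B
  simp only [restrictAt, Finset.mem_image, Finset.mem_filter]
  constructor
  · rintro ⟨C, ⟨⟨A, ⟨hA, hXA⟩, rfl⟩, hY⟩, rfl⟩
    rw [Finset.subset_sdiff] at hY
    exact ⟨A, ⟨hA, Finset.union_subset hXA hY.1⟩, by ext x; simp only [Finset.mem_sdiff, Finset.mem_union]; tauto⟩
  · rintro ⟨A, ⟨hA, hsub⟩, rfl⟩
    refine ⟨A \ X, ⟨⟨A, ⟨hA, (Finset.union_subset_iff.mp hsub).1⟩, rfl⟩, ?_⟩,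
      by ext x; simp only [Finset.mem_sdiff, Finset.mem_union]; tauto⟩
    exact Finset.subset_sdiff.mpr ⟨(Finset.union_subset_iff.mp hsub).2, hd⟩

lemma restrict_empty {α : Type*} [DecidableEq α] (F : Finset (Finset α)) :
    restrictAt F ∅ = F := by
  simp [restrictAt]

/-- **Lemma 8 of the paper.** If `F` is a family of subsets of `[n]`, each of
size at most `k`, with `|F| > r^k` for a real `r ≥ 1`, then `F(X)` is `r`-spread
for some set `X` with `|F(X)| > 1`. -/
theorem large_family_has_spread_restriction {n k : ℕ} {r : ℝ} (hr : 1 ≤ r)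
    (F : Finset (Finset (Fin n))) (hk : ∀ A ∈ F, A.card ≤ k)
    (hF : r ^ k < (F.card : ℝ)) :
    ∃ X : Finset (Fin n), IsSpread r (restrictAt F X) ∧ 1 < (restrictAt F X).card := by
  have hr0 : (0 : ℝ) < r := lt_of_lt_of_le one_pos hr
  -- the weight function
  set g : Finset (Fin n) → ℝ := fun X => r ^ X.card * (restrictAt F X).card with hg
  obtain ⟨X, -, hmax⟩ := Finset.exists_max_image (Finset.univ : Finset (Finset (Fin n))) g
    ⟨∅, Finset.mem_univ ∅⟩
  have hmax' : ∀ X', g X' ≤ g X := fun X' => hmax X' (Finset.mem_univ X')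
  have hgempty : g ∅ = (F.card : ℝ) := by simp [hg, restrict_empty]
  have hgX : r ^ k < g X := by
    calc r ^ k < (F.card : ℝ) := hF
    _ = g ∅ := hgempty.symm
    _ ≤ g X := hmax' ∅
  refine ⟨X, ?_, ?_⟩
  · -- spreadness
    intro Y
    rcases em (Disjoint Y X) with hd | hd
    · rw [restrict_restrict F X Y hd, card_restrictAt F (X ∪ Y)]
      have hcard : (X ∪ Y).card = X.card + Y.card := Finset.card_union_of_disjoint hd.symm
      have h1 : g (X ∪ Y) ≤ g X := hmax' (X ∪ Y)
      simp only [hg, hcard, ← card_restrictAt] at h1 ⊢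
      rw [pow_add] at h1
      rw [zpow_neg, zpow_natCast]
      have hx : (0:ℝ) < r ^ X.card := by positivity
      have hy : (0:ℝ) < r ^ Y.card := by positivity
      rw [inv_mul_eq_div, le_div_iff₀ hy]
      nlinarith [h1]
    · -- Y meets X, so the restriction is empty
      have : restrictAt (restrictAt F X) Y = ∅ := by
        rw [Finset.eq_empty_iff_forall_notMem]
        rintro B hB
        simp only [restrictAt, Finset.mem_image, Finset.mem_filter] at hB
        obtain ⟨C, ⟨⟨A, ⟨-, -⟩, rfl⟩, hY⟩, -⟩ := hB
        rw [Finset.subset_sdiff] at hY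
        exact hd hY.2
      rw [this]
      simp only [Finset.card_empty, Nat.cast_zero]
      positivity
  · -- cardinality > 1
    by_contra h
    push_neg at h
    interval_cases hc : (restrictAt F X).card
    · have h0 : g X = 0 := by simp [hg, hc]
      have hp : (0:ℝ) < r ^ k := by positivity
      linarith
    · -- card = 1 : there is A ∈ F with X ⊆ A, so |X| ≤ k
      have hne : (restrictAt F X).Nonempty := by rw [← Finset.card_pos, hc]; norm_num
      obtain ⟨B, hB⟩ := hne
      simp only [restrictAt, Finset.mem_image, Finset.mem_filter] at hB
      obtain ⟨A, ⟨hA, hXA⟩, -⟩ := hB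
      have hXk : X.card ≤ k := le_trans (Finset.card_le_card hXA) (hk A hA)
      have : g X = r ^ X.card := by simp [hg, hc]
      rw [this] at hgX
      exact absurd hgX (not_lt.mpr (pow_le_pow_right₀ hr hXk))
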